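/- Let k ≥ 3, v_1, ..., v_k > 0 with Σ v_i = 1 and v_i ≤ 1/3 for all i, and assume v_1 = max_i v_i. Define ψ : [0, 1/(4v_1)] → ℝ by ψ(μ) := Σ_{i=1}^k (1/2)(1 - √(1 - 4μ v_i)). Then there exists a unique μ* ∈ (0, 1/(4v_1)) with ψ(μ*) = 1. -/
import Mathlib


theorem stmt_12 (k : ℕ) (hk : 3 ≤ k) (v : Fin k → ℝ)
    (hpos : ∀ i, 0 < v i)
    (hsum : ∑ i, v i = 1)
    (hbd : ∀ i, v i ≤ 1/3)
    (hmax : ∀ i, v i ≤ v ⟨0, by omega⟩) :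
    ∃! μ : ℝ, μ ∈ Set.Ioo (0 : ℝ) (1 / (4 * v ⟨0, by omega⟩)) ∧
      ∑ i, (1/2) * (1 - Real.sqrt (1 - 4 * μ * v i)) = 1 := by
  have hk0 : 0 < k := by omega
  haveI : Nonempty (Fin k) := ⟨⟨0, hk0⟩⟩
  set i0 : Fin k := ⟨0, by omega⟩ with hi0
  set v0 : ℝ := v i0 with hv0
  have hv0pos : 0 < v0 := hpos i0
  set a : ℝ := 1 / (4 * v0) with ha
  have hapos : 0 < a := by positivity
  have hav0 : 4 * a * v0 = 1 := by
    rw [ha]; field_simp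
  set f : ℝ → ℝ := fun μ => ∑ i, (1/2) * (1 - Real.sqrt (1 - 4 * μ * v i)) with hf
  have hcont : Continuous f := by
    apply continuous_finset_sum
    intro i _
    fun_prop
  -- strict monotonicity on [0, a]
  have hmono : StrictMonoOn f (Set.Icc 0 a) := by
    intro x hx y hy hxy
    apply Finset.sum_lt_sum_of_nonempty Finset.univ_nonempty
    intro i _
    have hvi := hpos i
    have hvile : v i ≤ v0 := hmax i
    have h4a : 4 * a * v i ≤ 1 := by nlinarith
    have h1 : (0:ℝ) ≤ 1 - 4 * y * v i := by nlinarith [hy.2]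
    have hs : Real.sqrt (1 - 4 * y * v i) < Real.sqrt (1 - 4 * x * v i) :=
      Real.sqrt_lt_sqrt h1 (by nlinarith)
    nlinarith
  have hf0 : f 0 = 0 := by
    rw [hf]
    simp
  -- value at the right endpoint
  have hsum_erase : ∑ i ∈ Finset.univ.erase i0, v i = 1 - v0 := by
    have := Finset.add_sum_erase Finset.univ v (Finset.mem_univ i0)
    linarith [hsum ▸ this]
  have hkey : (∑ i, Real.sqrt (1 - 4 * a * v i)) < (k : ℝ) - 2 := by
    have hsplit : (∑ i, Real.sqrt (1 - 4 * a * v i)) =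
        Real.sqrt (1 - 4 * a * v0) + ∑ i ∈ Finset.univ.erase i0, Real.sqrt (1 - 4 * a * v i) :=
      (Finset.add_sum_erase Finset.univ (fun i => Real.sqrt (1 - 4 * a * v i))
        (Finset.mem_univ i0)).symm
    have h0 : Real.sqrt (1 - 4 * a * v0) = 0 := by
      rw [hav0]; simp
    have hlt : (∑ i ∈ Finset.univ.erase i0, Real.sqrt (1 - 4 * a * v i)) <
        ∑ i ∈ Finset.univ.erase i0, (1 - 2 * a * v i) := by
      apply Finset.sum_lt_sum_of_nonempty
      · rw [← Finset.card_pos, Finset.card_erase_of_mem (Finset.mem_univ i0),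
          Finset.card_univ, Fintype.card_fin]
        omega
      · intro i _
        have hvi := hpos i
        have hvile : v i ≤ v0 := hmax i
        have hy : 0 < 1 - 2 * a * v i := by nlinarith
        rw [Real.sqrt_lt' hy]
        nlinarith [pow_pos (mul_pos hapos hvi) 2]
    have hsum2 : (∑ i ∈ Finset.univ.erase i0, (1 - 2 * a * v i)) =
        ((k : ℝ) - 1) - 2 * a * (1 - v0) := by
      rw [Finset.sum_sub_distrib, Finset.sum_const, ← Finset.mul_sum, hsum_erase,
        Finset.card_erase_of_mem (Finset.mem_univ i0), Finset.card_univ, Fintype.card_fin,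
        nsmul_eq_mul, mul_one]
      have : ((k - 1 : ℕ) : ℝ) = (k : ℝ) - 1 := by
        push_cast [Nat.cast_sub (by omega : 1 ≤ k)]; ring
      rw [this]
    have hv013 : v0 ≤ 1/3 := hbd i0
    have h2a : 1 ≤ 2 * a * (1 - v0) := by nlinarith
    calc (∑ i, Real.sqrt (1 - 4 * a * v i))
        = ∑ i ∈ Finset.univ.erase i0, Real.sqrt (1 - 4 * a * v i) := by rw [hsplit, h0]; ring
      _ < ((k : ℝ) - 1) - 2 * a * (1 - v0) := by rw [← hsum2]; exact hlt
      _ ≤ (k : ℝ) - 2 := by linarith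
  have hfa : 1 < f a := by
    have hfa_eq : f a = (k : ℝ) / 2 - (1/2) * ∑ i, Real.sqrt (1 - 4 * a * v i) := by
      rw [hf]
      simp only []
      rw [show (∑ i : Fin k, (1/2) * (1 - Real.sqrt (1 - 4 * a * v i))) =
          ∑ i : Fin k, ((1:ℝ)/2 - (1/2) * Real.sqrt (1 - 4 * a * v i)) from
        Finset.sum_congr rfl (fun i _ => by ring)]
      rw [Finset.sum_sub_distrib, Finset.sum_const, ← Finset.mul_sum, Finset.card_univ,
        Fintype.card_fin]
      push_cast
      ring
    rw [hfa_eq]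
    linarith
  -- existence via IVT
  have hIoo : (1:ℝ) ∈ Set.Ioo (f 0) (f a) := by
    rw [hf0]; exact ⟨one_pos, hfa⟩
  obtain ⟨μ, hμmem, hμeq⟩ := intermediate_value_Ioo (le_of_lt hapos) hcont.continuousOn hIoo
  refine ⟨μ, ⟨hμmem, hμeq⟩, ?_⟩
  rintro y ⟨hymem, hyeq⟩
  have hyf : f y = 1 := hyeq
  exact hmono.injOn (Set.mem_Icc_of_Ioo hymem) (Set.mem_Icc_of_Ioo hμmem) (by rw [hyf, hμeq])
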